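/- Let R be a graded-commutative Z/2-algebra and φ : R → R a ring homomorphism with φ(x) ∈ {c, c + x} for degree-1 elements x, c of R satisfying x² = 0 and c² ≠ 0, where in the case φ(x) = c + x one additionally assumes φ(c) = c and the characteristic is 2, so that φ(x)² = c². Then φ(x²) = 0 forces c² = 0, a contradiction; hence any ring endomorphism of A = (Z/2)[x,c,d]/⟨x², c^(m+1) + c^m x, d^(n+1)⟩ (m ≥ 1) permuting the degree-1 space and preserving the relations must fix x. -/

import Mathlib

open MvPolynomial

/-- The mod 2 cohomology ring of the Wall manifold `Q(m,n)`:
`(ℤ/2)[x,c,d]/⟨x², c^(m+1) + c^m x, d^(n+1)⟩`, where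
`x = X 0`, `c = X 1`, `d = X 2`. -/
noncomputable abbrev WallCohomology (m n : ℕ) : Type :=
  MvPolynomial (Fin 3) (ZMod 2) ⧸
    (Ideal.span {(X 0 : MvPolynomial (Fin 3) (ZMod 2)) ^ 2,
      (X 1) ^ (m + 1) + (X 1) ^ m * (X 0), (X 2) ^ (n + 1)})

noncomputable def Wx (m n : ℕ) : WallCohomology m n := Ideal.Quotient.mk _ (X 0)
noncomputable def Wc (m n : ℕ) : WallCohomology m n := Ideal.Quotient.mk _ (X 1)
noncomputable def Wd (m n : ℕ) : WallCohomology m n := Ideal.Quotient.mk _ (X 2)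

/-- `c²` is not killed by the defining relations of the Wall cohomology ring (for `m ≥ 1`). -/
lemma wall_key (m n : ℕ) (hm : 1 ≤ m) :
    (X 1 : MvPolynomial (Fin 3) (ZMod 2)) ^ 2 ∉
      Ideal.span {(X 0 : MvPolynomial (Fin 3) (ZMod 2)) ^ 2,
        (X 1) ^ (m + 1) + (X 1) ^ m * (X 0), (X 2) ^ (n + 1)} := by
  intro h
  rw [Ideal.mem_span_insert] at h
  obtain ⟨p, z, hz, hE⟩ := h
  rw [Ideal.mem_span_insert] at hz
  obtain ⟨q, w, hw, rfl⟩ := hz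
  rw [Ideal.mem_span_singleton] at hw
  obtain ⟨r, rfl⟩ := hw
  -- rewrite everything in monomial form
  have e0 : (X 0 : MvPolynomial (Fin 3) (ZMod 2)) ^ 2
      = monomial (Finsupp.single 0 2) 1 := X_pow_eq_monomial
  have e1 : (X 1 : MvPolynomial (Fin 3) (ZMod 2)) ^ (m+1)
      = monomial (Finsupp.single 1 (m+1)) 1 := X_pow_eq_monomial
  have e1' : (X 1 : MvPolynomial (Fin 3) (ZMod 2)) ^ m * X 0
      = monomial (Finsupp.single 1 m + Finsupp.single 0 1) 1 := by
    rw [X_pow_eq_monomial, X, monomial_mul, mul_one]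
  have e2 : (X 2 : MvPolynomial (Fin 3) (ZMod 2)) ^ (n+1)
      = monomial (Finsupp.single 2 (n+1)) 1 := X_pow_eq_monomial
  have eL : (X 1 : MvPolynomial (Fin 3) (ZMod 2)) ^ 2
      = monomial (Finsupp.single 1 2) 1 := X_pow_eq_monomial
  rw [e0, e1, e1', e2, eL] at hE
  have H1 := congrArg (coeff (Finsupp.single 1 2)) hE
  have H2 := congrArg (coeff (Finsupp.single 1 1 + Finsupp.single 0 1)) hE
  simp only [mul_add, coeff_add, coeff_mul_monomial', coeff_monomial_mul',
    coeff_monomial, Finsupp.single_le_iff, Finsupp.single_apply] at H1 H2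
  simp only [Finsupp.le_def, Finsupp.add_apply, Finsupp.single_apply] at H1 H2
  simp only [Fin.forall_fin_succ, Fin.ext_iff] at H1 H2; norm_num at H1 H2
  rcases eq_or_lt_of_le hm with h | h
  · subst h
    norm_num [← Finsupp.single_add] at H1 H2
    have hne : (Finsupp.single 1 2 : Fin 3 →₀ ℕ) ≠ Finsupp.single 1 1 + Finsupp.single 0 1 := by
      intro hc
      have := DFunLike.congr_fun hc 0
      simp [Finsupp.single_apply] at this
    rw [if_neg hne, ← H1] at H2
    exact zero_ne_one H2
  · rw [if_neg (by omega)] at H1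
    exact one_ne_zero H1

/-- `x² = 0` in the Wall cohomology ring. -/
lemma wall_x_sq (m n : ℕ) : (Wx m n) ^ 2 = 0 := by
  rw [Wx, ← map_pow, Ideal.Quotient.eq_zero_iff_mem]
  exact Ideal.subset_span (by simp)

lemma two_eq_zero (R : Type) [CommRing R] [Algebra (ZMod 2) R] : (2 : R) = 0 := by
  calc (2 : R) = algebraMap (ZMod 2) R 2 := (map_ofNat _ 2).symm
    _ = 0 := by rw [show (2 : ZMod 2) = 0 by decide, map_zero]

/-- General principle: in a commutative `ℤ/2`-algebra with elements `x, c`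
satisfying `x² = 0` and `c² ≠ 0`, a ring endomorphism cannot send `x` to `c`,
nor (if it fixes `c`) to `c + x`.  Hence a ring endomorphism of
`H^*(Q(m,n); ℤ/2)` (`m ≥ 1`) whose value at `x` lies in the degree-1 span
`{x, c, c + x}` must fix `x`. -/
theorem stmt11 :
    (∀ (R : Type) [CommRing R] [Algebra (ZMod 2) R] (x c : R),
      x ^ 2 = 0 → c ^ 2 ≠ 0 → ∀ φ : R →+* R,
        φ x ≠ c ∧ (φ c = c → φ x ≠ c + x)) ∧
    (∀ m n : ℕ, 1 ≤ m →
      (Wc m n) ^ 2 ≠ 0 ∧ (Wc m n + Wx m n) ^ 2 = (Wc m n) ^ 2 ∧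
      ∀ φ : WallCohomology m n →+* WallCohomology m n,
        (φ (Wx m n) = Wx m n ∨ φ (Wx m n) = Wc m n ∨
          φ (Wx m n) = Wc m n + Wx m n) →
        φ (Wx m n) = Wx m n) := by
  constructor
  · intro R _ _ x c hx hc φ
    have hφ : (φ x) ^ 2 = 0 := by rw [← map_pow, hx, map_zero]
    have h2 : (2 : R) = 0 := two_eq_zero R
    constructor
    · intro h; rw [h] at hφ; exact hc hφ
    · intro _ h
      rw [h] at hφ
      apply hc
      have : (c + x) ^ 2 = c ^ 2 + 2 * (c * x) + x ^ 2 := by ring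
      rw [this, hx, h2] at hφ
      simpa using hφ
  · intro m n hm
    have hx2 : (Wx m n) ^ 2 = 0 := wall_x_sq m n
    have hc2 : (Wc m n) ^ 2 ≠ 0 := by
      intro h
      rw [Wc, ← map_pow, Ideal.Quotient.eq_zero_iff_mem] at h
      exact wall_key m n hm h
    have hsum : (Wc m n + Wx m n) ^ 2 = (Wc m n) ^ 2 := by
      have : (Wc m n + Wx m n) ^ 2
          = (Wc m n) ^ 2 + 2 * (Wc m n * Wx m n) + (Wx m n) ^ 2 := by ring
      rw [this, hx2]
      linear_combination (Wc m n * Wx m n) * two_eq_zero (WallCohomology m n)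
    refine ⟨hc2, hsum, ?_⟩
    intro φ hφ
    have hφ2 : (φ (Wx m n)) ^ 2 = 0 := by rw [← map_pow, hx2, map_zero]
    rcases hφ with h | h | h
    · exact h
    · rw [h] at hφ2; exact absurd hφ2 hc2
    · rw [h, hsum] at hφ2; exact absurd hφ2 hc2
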